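/- Let f : ℝ² → ℝ be convex and fix p̂ ∈ ℝ². Let e₁ = (1,0) and e₂ = (0,1). Then the vector s ∈ ℝ² with components s₁ = ½·(f'(p̂; e₁) − f'(p̂; −e₁)) and s₂ = ½·(f'(p̂; e₂) − f'(p̂; −e₂)) is a subgradient of f at p̂; that is, f(q) ≥ f(p̂) + ⟨s, q − p̂⟩ for all q ∈ ℝ². -/

import Mathlib

open Filter Topology Matrix Set

noncomputable def qslope (f : (Fin 2 → ℝ) → ℝ) (p d : Fin 2 → ℝ) (t : ℝ) : ℝ :=
  (f (p + t • d) - f p) / t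

noncomputable def Ddir (f : (Fin 2 → ℝ) → ℝ) (p d : Fin 2 → ℝ) : ℝ :=
  sInf (qslope f p d '' Set.Ioi 0)

lemma convexOn_line (f : (Fin 2 → ℝ) → ℝ) (hf : ConvexOn ℝ Set.univ f) (p d : Fin 2 → ℝ) :
    ConvexOn ℝ Set.univ (fun t : ℝ => f (p + t • d)) := by
  refine ⟨convex_univ, fun x _ y _ a b ha hb hab => ?_⟩
  have h2 := hf.2 (Set.mem_univ (p + x • d)) (Set.mem_univ (p + y • d)) ha hb hab
  have key : a • (p + x • d) + b • (p + y • d) = (a + b) • p + (a * x + b * y) • d := by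
    module
  rw [hab, one_smul] at key
  rw [key] at h2
  exact h2

lemma qslope_monotoneOn (f : (Fin 2 → ℝ) → ℝ) (hf : ConvexOn ℝ Set.univ f) (p d : Fin 2 → ℝ) :
    MonotoneOn (qslope f p d) (Set.Ioi 0) := by
  intro x hx y hy hxy
  have h := (convexOn_line f hf p d).secant_mono (a := 0) (Set.mem_univ 0)
    (Set.mem_univ x) (Set.mem_univ y) (ne_of_gt hx) (ne_of_gt hy) hxy
  simpa [qslope, sub_zero] using h

lemma qslope_bddBelow (f : (Fin 2 → ℝ) → ℝ) (hf : ConvexOn ℝ Set.univ f) (p d : Fin 2 → ℝ) :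
    BddBelow (qslope f p d '' Set.Ioi 0) := by
  refine ⟨(f (p + (-1 : ℝ) • d) - f p) / (-1 - 0), ?_⟩
  rintro _ ⟨t, ht, rfl⟩
  have h := (convexOn_line f hf p d).secant_mono (a := 0) (Set.mem_univ 0)
    (Set.mem_univ (-1)) (Set.mem_univ t) (by norm_num) (ne_of_gt ht) (by linarith [mem_Ioi.mp ht])
  simpa [qslope, sub_zero] using h

lemma tendsto_qslope (f : (Fin 2 → ℝ) → ℝ) (hf : ConvexOn ℝ Set.univ f) (p d : Fin 2 → ℝ) :
    Tendsto (qslope f p d) (𝓝[>] 0) (𝓝 (Ddir f p d)) :=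
  MonotoneOn.tendsto_nhdsGT (qslope_monotoneOn f hf p d) (qslope_bddBelow f hf p d)

lemma Ddir_le (f : (Fin 2 → ℝ) → ℝ) (hf : ConvexOn ℝ Set.univ f) (p d : Fin 2 → ℝ) :
    Ddir f p d ≤ f (p + d) - f p := by
  refine le_of_tendsto (tendsto_qslope f hf p d) ?_
  filter_upwards [self_mem_nhdsWithin, Ioo_mem_nhdsGT_of_mem (by norm_num : (0:ℝ) ∈ Set.Ico 0 1)]
    with t ht ht1
  have := qslope_monotoneOn f hf p d ht (by norm_num : (1:ℝ) ∈ Set.Ioi 0) (le_of_lt ht1.2)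
  simpa [qslope] using this

lemma Ddir_add_le (f : (Fin 2 → ℝ) → ℝ) (hf : ConvexOn ℝ Set.univ f) (p u v : Fin 2 → ℝ) :
    Ddir f p (u + v) ≤ Ddir f p u + Ddir f p v := by
  have h2 : Tendsto (fun t : ℝ => 2 * t) (𝓝[>] 0) (𝓝[>] 0) := by
    apply tendsto_nhdsWithin_of_tendsto_nhds_of_eventually_within
    · have : Tendsto (fun t : ℝ => 2 * t) (𝓝 0) (𝓝 (2 * 0)) :=
        (continuous_const.mul continuous_id).tendsto 0
      simpa using this.mono_left nhdsWithin_le_nhds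
    · filter_upwards [self_mem_nhdsWithin] with t ht
      exact mul_pos (by norm_num : (0:ℝ) < 2) ht
  have hR : Tendsto (fun t : ℝ => qslope f p u (2 * t) + qslope f p v (2 * t)) (𝓝[>] 0)
      (𝓝 (Ddir f p u + Ddir f p v)) :=
    ((tendsto_qslope f hf p u).comp h2).add ((tendsto_qslope f hf p v).comp h2)
  refine le_of_tendsto_of_tendsto (tendsto_qslope f hf p (u + v)) hR ?_
  filter_upwards [self_mem_nhdsWithin] with t ht
  have ht' : (0:ℝ) < t := ht
  have key : (1/2 : ℝ) • (p + (2*t) • u) + (1/2 : ℝ) • (p + (2*t) • v) = p + t • (u + v) := by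
    module
  have hcv := hf.2 (Set.mem_univ (p + (2*t) • u)) (Set.mem_univ (p + (2*t) • v))
    (by norm_num : (0:ℝ) ≤ 1/2) (by norm_num : (0:ℝ) ≤ 1/2) (by norm_num : (1/2 : ℝ) + 1/2 = 1)
  rw [key] at hcv
  simp only [smul_eq_mul] at hcv
  show qslope f p (u+v) t ≤ _
  unfold qslope
  rw [← add_div, div_le_div_iff₀ ht' (by linarith : (0:ℝ) < 2*t)]
  nlinarith [hcv, ht'.le]

lemma Ddir_smul (f : (Fin 2 → ℝ) → ℝ) (hf : ConvexOn ℝ Set.univ f) (p d : Fin 2 → ℝ)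
    {c : ℝ} (hc : 0 < c) : Ddir f p (c • d) = c * Ddir f p d := by
  have hcm : Tendsto (fun t : ℝ => c * t) (𝓝[>] 0) (𝓝[>] 0) := by
    apply tendsto_nhdsWithin_of_tendsto_nhds_of_eventually_within
    · have : Tendsto (fun t : ℝ => c * t) (𝓝 0) (𝓝 (c * 0)) :=
        (continuous_const.mul continuous_id).tendsto 0
      simpa using this.mono_left nhdsWithin_le_nhds
    · filter_upwards [self_mem_nhdsWithin] with t ht
      exact mul_pos hc ht
  have hR : Tendsto (fun t : ℝ => c * qslope f p d (c * t)) (𝓝[>] 0) (𝓝 (c * Ddir f p d)) :=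
    (((tendsto_qslope f hf p d).comp hcm)).const_mul c
  have heq : ∀ᶠ t in 𝓝[>] (0:ℝ), qslope f p (c • d) t = c * qslope f p d (c * t) := by
    filter_upwards [self_mem_nhdsWithin] with t ht
    have ht' : (0:ℝ) < t := ht
    unfold qslope
    rw [smul_smul, mul_comm t c]
    field_simp
  exact tendsto_nhds_unique ((tendsto_qslope f hf p (c • d)).congr' heq) hR

lemma Ddir_zero (f : (Fin 2 → ℝ) → ℝ) (p : Fin 2 → ℝ) : Ddir f p 0 = 0 := by
  have : qslope f p 0 '' Set.Ioi 0 = {0} := by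
    ext x
    constructor
    · rintro ⟨t, ht, rfl⟩; simp [qslope]
    · intro hx
      simp only [Set.mem_singleton_iff] at hx
      subst hx
      exact ⟨1, by norm_num, by simp [qslope]⟩
  simp [Ddir, this]

lemma Ddir_smul_diff (f : (Fin 2 → ℝ) → ℝ) (hf : ConvexOn ℝ Set.univ f) (p u : Fin 2 → ℝ)
    (c : ℝ) :
    Ddir f p (c • u) - Ddir f p (-(c • u)) = c * (Ddir f p u - Ddir f p (-u)) := by
  rcases lt_trichotomy c 0 with hc | rfl | hc
  · have h1 : c • u = (-c) • (-u) := by module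
    have h2 : -(c • u) = (-c) • u := by module
    rw [h2, h1, Ddir_smul f hf p (-u) (neg_pos.mpr hc), Ddir_smul f hf p u (neg_pos.mpr hc)]
    ring
  · simp [Ddir_zero]
  · have h2 : -(c • u) = c • (-u) := by module
    rw [h2, Ddir_smul f hf p u hc, Ddir_smul f hf p (-u) hc]
    ring

/-- for a convex function on ℝ², the vector whose components are
halved differences of directional derivatives along the cardinal directions is a
subgradient. -/
theorem cardinal_directional_derivatives_give_subgradient
    (f : (Fin 2 → ℝ) → ℝ) (hf : ConvexOn ℝ Set.univ f) (phat : Fin 2 → ℝ) :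
    ∃ Dpos Dneg : Fin 2 → ℝ,
      (∀ i : Fin 2,
        Tendsto (fun t : ℝ => (f (phat + t • (Pi.single i 1 : Fin 2 → ℝ)) - f phat) / t)
          (𝓝[>] 0) (𝓝 (Dpos i))) ∧
      (∀ i : Fin 2,
        Tendsto (fun t : ℝ => (f (phat + t • (-(Pi.single i 1 : Fin 2 → ℝ))) - f phat) / t)
          (𝓝[>] 0) (𝓝 (Dneg i))) ∧
      (∀ q : Fin 2 → ℝ,
        f q ≥ f phat + (fun i => (Dpos i - Dneg i) / 2) ⬝ᵥ (q - phat)) := by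
  refine ⟨fun i => Ddir f phat (Pi.single i 1), fun i => Ddir f phat (-(Pi.single i 1)),
    fun i => tendsto_qslope f hf phat _, fun i => tendsto_qslope f hf phat _, fun q => ?_⟩
  set d : Fin 2 → ℝ := q - phat with hd
  have hq : phat + d = q := by simp [hd]
  have hdecomp : d = d 0 • (Pi.single 0 1 : Fin 2 → ℝ) + d 1 • (Pi.single 1 1 : Fin 2 → ℝ) := by
    funext i
    fin_cases i <;> simp [Pi.single_apply]
  have hA : Ddir f phat (d 0 • (Pi.single 0 1 : Fin 2 → ℝ)) ≤
      Ddir f phat d + Ddir f phat (-(d 1 • (Pi.single 1 1 : Fin 2 → ℝ)))  := by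
    have he : d 0 • (Pi.single 0 1 : Fin 2 → ℝ) =
        d + -(d 1 • (Pi.single 1 1 : Fin 2 → ℝ)) := by
      funext i; fin_cases i <;> simp [Pi.single_apply]
    rw [he]
    exact Ddir_add_le f hf phat _ _
  have hB : Ddir f phat (d 1 • (Pi.single 1 1 : Fin 2 → ℝ)) ≤
      Ddir f phat d + Ddir f phat (-(d 0 • (Pi.single 0 1 : Fin 2 → ℝ)))  := by
    have he : d 1 • (Pi.single 1 1 : Fin 2 → ℝ) =
        d + -(d 0 • (Pi.single 0 1 : Fin 2 → ℝ)) := by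
      funext i; fin_cases i <;> simp [Pi.single_apply]
    rw [he]
    exact Ddir_add_le f hf phat _ _
  have hC0 := Ddir_smul_diff f hf phat (Pi.single 0 1) (d 0)
  have hC1 := Ddir_smul_diff f hf phat (Pi.single 1 1) (d 1)
  have hL : Ddir f phat d ≤ f q - f phat := by
    have := Ddir_le f hf phat d
    rwa [hq] at this
  have expand : (fun i => (Ddir f phat (Pi.single i 1) - Ddir f phat (-(Pi.single i 1))) / 2) ⬝ᵥ
      (q - phat) =
      (Ddir f phat (Pi.single 0 1) - Ddir f phat (-(Pi.single 0 1))) / 2 * d 0 +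
      (Ddir f phat (Pi.single 1 1) - Ddir f phat (-(Pi.single 1 1))) / 2 * d 1 := by
    simp [dotProduct, Fin.sum_univ_two, hd]
  rw [ge_iff_le, expand]
  linarith [hA, hB, hC0, hC1, hL]
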